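/- For β ∈ [0,2] and M ∈ 𝔐^β, the β-inversion is an involution: (M^β)^β = M. -/

import Mathlib

open MeasureTheory ENNReal Filter Topology Set

noncomputable section

abbrev Rd (d : ℕ) := EuclideanSpace ℝ (Fin d)

/-- The spherical inversion map `x ↦ x / |x|²` (sending `0` to `0`). -/
def sphInv {d : ℕ} (x : Rd d) : Rd d := (‖x‖ ^ 2)⁻¹ • x

/-- The β-inversion of a measure `M`:
`M^β(A) = ∫ 1_A(x/|x|²) |x|^{2+β} M(dx)`. -/
def betaInv {d : ℕ} (β : ℝ) (M : Measure (Rd d)) : Measure (Rd d) :=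
  Measure.map sphInv (M.withDensity fun x => ENNReal.ofReal (‖x‖ ^ (2 + β)))

/-- `M ∈ 𝔐^β`: `M({0}) = 0` and `∫ (|x|² ∧ |x|^β) M(dx) < ∞`. -/
def MemM {d : ℕ} (β : ℝ) (M : Measure (Rd d)) : Prop :=
  M {0} = 0 ∧ ∫⁻ x, ENNReal.ofReal (min (‖x‖ ^ (2 : ℝ)) (‖x‖ ^ β)) ∂M < ⊤

lemma sphInv_measurable {d : ℕ} : Measurable (sphInv (d := d)) :=
  (((measurable_norm.pow_const 2).inv).smul measurable_id)

lemma norm_sphInv {d : ℕ} (x : Rd d) : ‖sphInv x‖ = ‖x‖⁻¹ := by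
  rcases eq_or_ne x 0 with rfl | hx
  · simp [sphInv]
  · have h : ‖x‖ ≠ 0 := norm_ne_zero_iff.mpr hx
    rw [sphInv, norm_smul, norm_inv, norm_pow, norm_norm]
    field_simp

lemma sphInv_sphInv {d : ℕ} (x : Rd d) : sphInv (sphInv x) = x := by
  rcases eq_or_ne x 0 with rfl | hx
  · simp [sphInv]
  · have h : ‖x‖ ≠ 0 := norm_ne_zero_iff.mpr hx
    have h2 : sphInv (sphInv x) = ((‖x‖⁻¹) ^ 2)⁻¹ • ((‖x‖ ^ 2)⁻¹ • x) := by
      rw [sphInv, norm_sphInv, sphInv]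
    rw [h2, smul_smul, inv_pow, inv_inv,
      mul_inv_cancel₀ (pow_ne_zero 2 h), one_smul]

lemma withDensity_map {α : Type*} [MeasurableSpace α] (ν : Measure α) {g : α → α}
    (hg : Measurable g) {f : α → ℝ≥0∞} (hf : Measurable f) :
    (ν.map g).withDensity f = (ν.withDensity (f ∘ g)).map g := by
  ext s hs
  rw [withDensity_apply _ hs, setLIntegral_map hs hf hg,
    Measure.map_apply hg hs, withDensity_apply _ (hg hs)]
  rfl

theorem stmt1 {d : ℕ} (β : ℝ) (hβ : β ∈ Set.Icc (0 : ℝ) 2)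
    (M : Measure (Rd d)) (hM : MemM β M) :
    betaInv β (betaInv β M) = M := by
  set f : Rd d → ℝ≥0∞ := fun x => ENNReal.ofReal (‖x‖ ^ (2 + β)) with hf_def
  have hf : Measurable f := (measurable_norm.pow measurable_const).ennreal_ofReal
  have hfg : Measurable (f ∘ sphInv) := hf.comp sphInv_measurable
  rw [betaInv, betaInv, withDensity_map _ sphInv_measurable hf,
    Measure.map_map sphInv_measurable sphInv_measurable,
    ← withDensity_mul _ hf hfg]
  have hcomp : (fun x => sphInv (sphInv x)) = (id : Rd d → Rd d) := by
    funext x; exact sphInv_sphInv x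
  have key : f * f ∘ sphInv =ᵐ[M] 1 := by
    have hsub : {x : Rd d | ¬ (f * f ∘ sphInv) x = (1 : Rd d → ℝ≥0∞) x} ⊆ {0} := by
      intro x hx
      by_contra hx0
      apply hx
      have hx0' : x ≠ 0 := by simpa using hx0
      have h : ‖x‖ ≠ 0 := norm_ne_zero_iff.mpr hx0'
      have hpos : (0:ℝ) < ‖x‖ := norm_pos_iff.mpr hx0'
      simp only [Pi.mul_apply, Function.comp, hf_def, norm_sphInv, Pi.one_apply]
      rw [← ENNReal.ofReal_mul (by positivity),
        ← Real.mul_rpow (norm_nonneg x) (by positivity), mul_inv_cancel₀ h,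
        Real.one_rpow, ENNReal.ofReal_one]
    have : M {x : Rd d | ¬ (f * f ∘ sphInv) x = (1 : Rd d → ℝ≥0∞) x} = 0 :=
      measure_mono_null hsub hM.1
    exact this
  rw [Function.comp_def sphInv sphInv, hcomp, Measure.map_id,
    withDensity_congr_ae key, withDensity_one]
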